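/- Let A ∈ ℝ^{n×d} have rank r and thin SVD A = UΣVᵀ, let 1 ≤ k < d, fix integers 1 ≤ m ≤ q ≤ r, a diagonal matrix Σ̃ = diag(d₁,…,d_q,0,…,0) ∈ ℝ^{r×r} with d₁ ≥ … ≥ d_q > 0, and set Σ̃_⊥ = diag(0,…,0,1,…,1) ∈ ℝ^{r×r} (first q entries zero, last r−q entries one). Let X ∈ ℝ^{d×(d−k)} satisfy XᵀX = I_{d−k}. If W ∈ ℝ^{s×n} satisfies ‖Σ̃Uᵀ WᵀW UΣ̃ − Σ̃²‖₂ ≤ ε, then |tr(Xᵀ V Σ_m Uᵀ (WᵀW − I_n) U Σ_m Vᵀ X)| ≤ d_m⁻² ε ‖A_m X‖_F² ≤ d_m⁻² ε ‖AX‖_F². -/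

import Mathlib

open Matrix BigOperators

noncomputable def frobNorm {m n : Type*} [Fintype m] [Fintype n]
    (A : Matrix m n ℝ) : ℝ := Real.sqrt (∑ i, ∑ j, (A i j) ^ 2)

noncomputable def specNorm {m n : ℕ} (A : Matrix (Fin m) (Fin n) ℝ) : ℝ :=
  ‖LinearMap.toContinuousLinearMap (Matrix.toEuclideanLin A)‖

noncomputable def truncDiag {r : ℕ} (σ : Fin r → ℝ) (m : ℕ) :
    Matrix (Fin r) (Fin r) ℝ :=
  Matrix.diagonal fun i => if (i : ℕ) < m then σ i else 0

noncomputable def samplingMatrix {n : ℕ} (p : Fin n → ℝ) (s : ℕ) (ω : Fin s → Fin n) :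
    Matrix (Fin s) (Fin n) ℝ :=
  fun i j => if j = ω i then 1 / Real.sqrt (s * p j) else 0

noncomputable def expec {n s : ℕ} (p : Fin n → ℝ) (f : (Fin s → Fin n) → ℝ) : ℝ :=
  ∑ ω : Fin s → Fin n, (∏ i, p (ω i)) * f ω

open Classical in
noncomputable def probOf {n s : ℕ} (p : Fin n → ℝ) (E : (Fin s → Fin n) → Prop) : ℝ :=
  ∑ ω : Fin s → Fin n, if E ω then (∏ i, p (ω i)) else 0

def firstCols {n r : ℕ} (U : Matrix (Fin n) (Fin r) ℝ) (k : ℕ) (h : k ≤ r) :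
    Matrix (Fin n) (Fin k) ℝ :=
  fun i j => U i (Fin.castLE h j)

noncomputable def ridgeDiag {r : ℕ} (σ : Fin r → ℝ) (lam : ℝ) :
    Matrix (Fin r) (Fin r) ℝ :=
  Matrix.diagonal fun i => σ i / Real.sqrt (σ i ^ 2 + lam)

lemma frob_sq {a b : Type*} [Fintype a] [Fintype b] (A : Matrix a b ℝ) :
    frobNorm A ^ 2 = ∑ i, ∑ j, A i j ^ 2 := by
  rw [frobNorm, Real.sq_sqrt]
  positivity

lemma specNorm_nonneg {a b : ℕ} (A : Matrix (Fin a) (Fin b) ℝ) : 0 ≤ specNorm A :=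
  norm_nonneg _

lemma quad_bound {nn : ℕ} (N : Matrix (Fin nn) (Fin nn) ℝ) (c : Fin nn → ℝ) :
    |c ⬝ᵥ N *ᵥ c| ≤ specNorm N * ∑ a, c a ^ 2 := by
  set x : EuclideanSpace ℝ (Fin nn) := (WithLp.equiv 2 (Fin nn → ℝ)).symm c with hx
  set T := LinearMap.toContinuousLinearMap (Matrix.toEuclideanLin N) with hT
  have h1 : c ⬝ᵥ N *ᵥ c = inner ℝ x (T x) := by
    rw [hT, hx]
    simp only [LinearMap.coe_toContinuousLinearMap', WithLp.equiv_symm_apply, toEuclideanLin_apply_piLp_toLp]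
    rw [real_inner_comm]
    simp [PiLp.inner_apply, dotProduct, PiLp.toLp_apply, mul_comm]
  have h2 : ‖x‖ ^ 2 = ∑ a, c a ^ 2 := by
    rw [EuclideanSpace.norm_eq, Real.sq_sqrt (by positivity)]
    simp [hx, WithLp.equiv_symm_apply, PiLp.toLp_apply, sq_abs]
  calc |c ⬝ᵥ N *ᵥ c| = |inner ℝ x (T x)| := by rw [h1]
    _ ≤ ‖x‖ * ‖T x‖ := abs_real_inner_le_norm x (T x)
    _ ≤ ‖x‖ * (‖T‖ * ‖x‖) := by
        exact mul_le_mul_of_nonneg_left (T.le_opNorm x) (norm_nonneg x)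
    _ = ‖T‖ * ‖x‖ ^ 2 := by ring
    _ = specNorm N * ∑ a, c a ^ 2 := by rw [h2]; rfl

lemma trace_quad_bound {nn t : ℕ} (N : Matrix (Fin nn) (Fin nn) ℝ)
    (B : Matrix (Fin nn) (Fin t) ℝ) :
    |Matrix.trace (Bᵀ * N * B)| ≤ specNorm N * ∑ i, ∑ j, B i j ^ 2 := by
  have htr : Matrix.trace (Bᵀ * N * B) = ∑ j, (fun a => B a j) ⬝ᵥ N *ᵥ (fun a => B a j) := by
    simp only [Matrix.trace, Matrix.diag, Matrix.mul_apply, dotProduct, Matrix.mulVec,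
      Matrix.transpose_apply, dotProduct]
    refine Finset.sum_congr rfl fun j _ => ?_
    simp only [Finset.sum_mul, Finset.mul_sum]
    rw [Finset.sum_comm]
    exact Finset.sum_congr rfl fun i _ => Finset.sum_congr rfl fun b _ => by ring
  rw [htr, Finset.sum_comm (s := Finset.univ) (t := Finset.univ) (f := fun i j => B i j ^ 2)]
  calc |∑ j, (fun a => B a j) ⬝ᵥ N *ᵥ (fun a => B a j)|
      ≤ ∑ j, |(fun a => B a j) ⬝ᵥ N *ᵥ (fun a => B a j)| := Finset.abs_sum_le_sum_abs _ _
    _ ≤ ∑ j, specNorm N * ∑ a, B a j ^ 2 := Finset.sum_le_sum fun j _ => quad_bound N _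
    _ = specNorm N * ∑ j, ∑ a, B a j ^ 2 := by rw [Finset.mul_sum]

lemma frob_sq_trace {a b : Type*} [Fintype a] [Fintype b] (A : Matrix a b ℝ) :
    frobNorm A ^ 2 = Matrix.trace (Aᵀ * A) := by
  rw [frob_sq]
  simp only [Matrix.trace, Matrix.diag, Matrix.mul_apply, Matrix.transpose_apply, sq]
  exact Finset.sum_comm

lemma frob_orth_mul {a b c : Type*} [Fintype a] [Fintype b] [Fintype c] [DecidableEq b]
    (U : Matrix a b ℝ) (hU : Uᵀ * U = 1) (B : Matrix b c ℝ) :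
    frobNorm (U * B) ^ 2 = frobNorm B ^ 2 := by
  rw [frob_sq_trace, frob_sq_trace, Matrix.transpose_mul, Matrix.mul_assoc,
    ← Matrix.mul_assoc Uᵀ, hU, Matrix.one_mul]

set_option maxHeartbeats 1000000 in
theorem main_calc {n d s r : ℕ} {k m q : ℕ}
    (A : Matrix (Fin n) (Fin d) ℝ)
    (U : Matrix (Fin n) (Fin r) ℝ) (V : Matrix (Fin d) (Fin r) ℝ) (σ : Fin r → ℝ)
    (hU : Uᵀ * U = 1) (hV : Vᵀ * V = 1)
    (hσdec : ∀ i j : Fin r, i ≤ j → σ j ≤ σ i) (hσpos : ∀ i, 0 < σ i)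
    (hA : A = U * Matrix.diagonal σ * Vᵀ) (hr : A.rank = r)
    (hk1 : 1 ≤ k) (hkd : k < d)
    (hm1 : 1 ≤ m) (hmq : m ≤ q) (hqr : q ≤ r)
    (dd : Fin r → ℝ)
    (hdd_dec : ∀ i j : Fin r, i ≤ j → dd j ≤ dd i)
    (hdd_pos : ∀ i : Fin r, (i : ℕ) < q → 0 < dd i)
    (hdd_zero : ∀ i : Fin r, q ≤ (i : ℕ) → dd i = 0)
    (X : Matrix (Fin d) (Fin (d - k)) ℝ) (hX : Xᵀ * X = 1)
    (ε : ℝ)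
    (W : Matrix (Fin s) (Fin n) ℝ)
    (h1 : specNorm ((Matrix.diagonal dd) * Uᵀ * Wᵀ * W * U * (Matrix.diagonal dd)
        - (Matrix.diagonal dd) * (Matrix.diagonal dd)) ≤ ε)
    (hmr : m - 1 < r) :
    |Matrix.trace (Xᵀ * V * truncDiag σ m * Uᵀ * (Wᵀ * W - 1) * U * truncDiag σ m * Vᵀ * X)|
        ≤ (dd ⟨m - 1, hmr⟩)⁻¹ ^ 2 * ε * frobNorm (U * truncDiag σ m * Vᵀ * X) ^ 2
      ∧ (dd ⟨m - 1, hmr⟩)⁻¹ ^ 2 * ε * frobNorm (U * truncDiag σ m * Vᵀ * X) ^ 2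
        ≤ (dd ⟨m - 1, hmr⟩)⁻¹ ^ 2 * ε * frobNorm (A * X) ^ 2 := by
  have hε : 0 ≤ ε := le_trans (specNorm_nonneg _) h1
  have hdm : 0 < dd ⟨m - 1, hmr⟩ := hdd_pos _ (by simp; omega)
  have hddi : ∀ i : Fin r, (i : ℕ) < m → 0 < dd i :=
    fun i hi => hdd_pos i (lt_of_lt_of_le hi hmq)
  set e : Fin r → ℝ := fun i => if (i : ℕ) < m then σ i / dd i else 0 with he
  set D := Matrix.diagonal dd with hD
  set E := Matrix.diagonal e with hE
  set N := D * Uᵀ * (Wᵀ * W - 1) * U * D with hN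
  set B := E * (Vᵀ * X) with hB
  have hED : E * D = truncDiag σ m := by
    rw [hE, hD, Matrix.diagonal_mul_diagonal, truncDiag]
    refine congrArg Matrix.diagonal (funext fun i => ?_)
    simp only [he]
    split_ifs with h
    · rw [div_mul_cancel₀ _ (ne_of_gt (hddi i h))]
    · simp
  have hDE : D * E = truncDiag σ m := by
    rw [hE, hD, Matrix.diagonal_mul_diagonal, truncDiag]
    refine congrArg Matrix.diagonal (funext fun i => ?_)
    simp only [he]
    split_ifs with h
    · rw [mul_comm, div_mul_cancel₀ _ (ne_of_gt (hddi i h))]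
    · simp
  have key : Xᵀ * V * truncDiag σ m * Uᵀ * (Wᵀ * W - 1) * U * truncDiag σ m * Vᵀ * X
      = Bᵀ * N * B := by
    have hEt : Eᵀ = E := by rw [hE, Matrix.diagonal_transpose]
    rw [hB, hN, ← hED]
    simp only [Matrix.transpose_mul, hEt, Matrix.mul_assoc, Matrix.transpose_transpose]
    rw [show E * (D * (Vᵀ * X)) = D * (E * (Vᵀ * X)) by
      rw [← Matrix.mul_assoc E D, hED, ← Matrix.mul_assoc D E, hDE]]
  have hNe : specNorm N ≤ ε := by
    have : N = D * Uᵀ * Wᵀ * W * U * D - D * D := by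
      rw [hN]
      have h2 : D * Uᵀ * (Wᵀ * W - 1) = D * Uᵀ * (Wᵀ * W) - D * Uᵀ := by
        rw [Matrix.mul_sub, Matrix.mul_one]
      rw [h2, Matrix.sub_mul, Matrix.sub_mul, Matrix.mul_assoc D Uᵀ U, hU, Matrix.mul_one]
      simp only [Matrix.mul_assoc]
    rw [this]; exact h1
  have htb : |Matrix.trace (Bᵀ * N * B)| ≤ ε * ∑ i, ∑ j, B i j ^ 2 := by
    refine le_trans (trace_quad_bound N B) ?_
    have hBnn : 0 ≤ ∑ i, ∑ j, B i j ^ 2 := by positivity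
    exact mul_le_mul_of_nonneg_right hNe hBnn
  -- entrywise comparison
  have hBentry : ∀ i j, B i j = e i * (Vᵀ * X) i j := by
    intro i j; rw [hB, hE]; exact Matrix.diagonal_mul _ _ _ _
  have hSentry : ∀ (i : Fin r) (j), (truncDiag σ m * (Vᵀ * X)) i j
      = (if (i : ℕ) < m then σ i else 0) * (Vᵀ * X) i j := by
    intro i j; exact Matrix.diagonal_mul _ _ _ _
  have hfrobU : frobNorm (U * truncDiag σ m * Vᵀ * X) ^ 2
      = ∑ i, ∑ j, ((truncDiag σ m * (Vᵀ * X)) i j) ^ 2 := by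
    rw [show U * truncDiag σ m * Vᵀ * X = U * (truncDiag σ m * (Vᵀ * X)) by
      simp only [Matrix.mul_assoc], frob_orth_mul U hU, frob_sq]
  have hfrobA : frobNorm (A * X) ^ 2 = ∑ i, ∑ j, ((Matrix.diagonal σ * (Vᵀ * X)) i j) ^ 2 := by
    rw [show A * X = U * (Matrix.diagonal σ * (Vᵀ * X)) by
      rw [hA]; simp only [Matrix.mul_assoc], frob_orth_mul U hU, frob_sq]
  have hcompare : ∑ i, ∑ j, B i j ^ 2
      ≤ (dd ⟨m - 1, hmr⟩)⁻¹ ^ 2 * ∑ i, ∑ j, ((truncDiag σ m * (Vᵀ * X)) i j) ^ 2 := by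
    rw [Finset.mul_sum]
    refine Finset.sum_le_sum fun i _ => ?_
    rw [Finset.mul_sum]
    refine Finset.sum_le_sum fun j _ => ?_
    rw [hBentry, hSentry, mul_pow, mul_pow, ← mul_assoc]
    simp only [he]
    refine mul_le_mul_of_nonneg_right ?_ (sq_nonneg _)
    split_ifs with h
    · have hpos := hddi i h
      have hle : dd ⟨m - 1, hmr⟩ ≤ dd i := hdd_dec i ⟨m - 1, hmr⟩ (by
        simp only [Fin.le_def]; omega)
      rw [div_pow, inv_pow, mul_comm, ← div_eq_mul_inv]
      gcongr
    · simp
  constructor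
  · rw [key, hfrobU]
    refine le_trans htb ?_
    calc ε * ∑ i, ∑ j, B i j ^ 2
        ≤ ε * ((dd ⟨m - 1, hmr⟩)⁻¹ ^ 2 * ∑ i, ∑ j, ((truncDiag σ m * (Vᵀ * X)) i j) ^ 2) :=
          mul_le_mul_of_nonneg_left hcompare hε
      _ = (dd ⟨m - 1, hmr⟩)⁻¹ ^ 2 * ε * ∑ i, ∑ j, ((truncDiag σ m * (Vᵀ * X)) i j) ^ 2 := by
          ring
  · rw [hfrobU, hfrobA]
    refine mul_le_mul_of_nonneg_left ?_ (mul_nonneg (by positivity) hε)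
    refine Finset.sum_le_sum fun i _ => Finset.sum_le_sum fun j _ => ?_
    rw [hSentry, show (Matrix.diagonal σ * (Vᵀ * X)) i j = σ i * (Vᵀ * X) i j from
      Matrix.diagonal_mul _ _ _ _]
    split_ifs with h
    · exact le_rfl
    · rw [zero_mul]
      simpa using sq_nonneg (σ i * (Vᵀ * X) i j)

/-- bounding the term Δ₁. -/
theorem stmt_1 {n d s r : ℕ} {k m q : ℕ}
    (A : Matrix (Fin n) (Fin d) ℝ)
    (U : Matrix (Fin n) (Fin r) ℝ) (V : Matrix (Fin d) (Fin r) ℝ) (σ : Fin r → ℝ)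
    (hU : Uᵀ * U = 1) (hV : Vᵀ * V = 1)
    (hσdec : ∀ i j : Fin r, i ≤ j → σ j ≤ σ i) (hσpos : ∀ i, 0 < σ i)
    (hA : A = U * Matrix.diagonal σ * Vᵀ) (hr : A.rank = r)
    (hk1 : 1 ≤ k) (hkd : k < d)
    (hm1 : 1 ≤ m) (hmq : m ≤ q) (hqr : q ≤ r)
    (dd : Fin r → ℝ)
    (hdd_dec : ∀ i j : Fin r, i ≤ j → dd j ≤ dd i)
    (hdd_pos : ∀ i : Fin r, (i : ℕ) < q → 0 < dd i)
    (hdd_zero : ∀ i : Fin r, q ≤ (i : ℕ) → dd i = 0)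
    (X : Matrix (Fin d) (Fin (d - k)) ℝ) (hX : Xᵀ * X = 1)
    (ε : ℝ)
    (W : Matrix (Fin s) (Fin n) ℝ)
    (h1 : specNorm (Matrix.diagonal dd * Uᵀ * Wᵀ * W * U * Matrix.diagonal dd
        - Matrix.diagonal dd * Matrix.diagonal dd) ≤ ε) :
    |Matrix.trace (Xᵀ * V * truncDiag σ m * Uᵀ * (Wᵀ * W - 1) * U * truncDiag σ m * Vᵀ * X)|
        ≤ (dd ⟨m - 1, by omega⟩)⁻¹ ^ 2 * ε * frobNorm (U * truncDiag σ m * Vᵀ * X) ^ 2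
      ∧ (dd ⟨m - 1, by omega⟩)⁻¹ ^ 2 * ε * frobNorm (U * truncDiag σ m * Vᵀ * X) ^ 2
        ≤ (dd ⟨m - 1, by omega⟩)⁻¹ ^ 2 * ε * frobNorm (A * X) ^ 2 := by
  exact main_calc A U V σ hU hV hσdec hσpos hA hr hk1 hkd hm1 hmq hqr dd hdd_dec hdd_pos hdd_zero X hX ε W h1 (by omega)
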